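/- Let P₁, P₂, τ₁, τ₂ > 0 satisfy τ₁·γ(P₂) ≤ τ₂·(γ(P₁+P₂) − γ(P₂)) (Case III), write a = γ(P₁), b = γ(P₂), s = γ(P₁+P₂), and let R = {(d₁, d₂) ∈ ℝ² : a·d₁ ≥ τ₁, b·d₂ ≥ τ₂, (s−b)·d₁ + b·d₂ ≥ τ₁ + τ₂}. Set w₁ = (s−b)/s, Ā = (τ₁/(s−b), τ₂/b) and B̄ = (τ₁/a, τ₂/b + (a+b−s)·τ₁/(a·b)). Then Ā ∈ R and B̄ ∈ R, and for every w ∈ [0,1] and every (d₁, d₂) ∈ R: if w ∈ [0, w₁] then w·Ā₁ + (1−w)·Ā₂ ≤ w·d₁ + (1−w)·d₂, and if w ∈ [w₁, 1] then w·B̄₁ + (1−w)·B̄₂ ≤ w·d₁ + (1−w)·d₂. -/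

import Mathlib

/-- γ(x) = (1/2)·log₂(1+x). -/
noncomputable def gam (x : ℝ) : ℝ := (1/2) * Real.logb 2 (1 + x)

theorem stmt_16 (P₁ P₂ τ₁ τ₂ a b s : ℝ) (hP₁ : 0 < P₁) (hP₂ : 0 < P₂)
    (hτ₁ : 0 < τ₁) (hτ₂ : 0 < τ₂)
    (ha : a = gam P₁) (hb : b = gam P₂) (hs : s = gam (P₁ + P₂))
    (hcase : τ₁ * b ≤ τ₂ * (s - b))
    (R : Set (ℝ × ℝ))
    (hR : R = {d : ℝ × ℝ | a * d.1 ≥ τ₁ ∧ b * d.2 ≥ τ₂ ∧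
        (s - b) * d.1 + b * d.2 ≥ τ₁ + τ₂}) :
    (τ₁ / (s - b), τ₂ / b) ∈ R ∧
    (τ₁ / a, τ₂ / b + (a + b - s) * τ₁ / (a * b)) ∈ R ∧
    ∀ w : ℝ, w ∈ Set.Icc (0:ℝ) 1 → ∀ d : ℝ × ℝ, d ∈ R →
      (w ∈ Set.Icc (0:ℝ) ((s - b) / s) →
        w * (τ₁ / (s - b)) + (1 - w) * (τ₂ / b) ≤ w * d.1 + (1 - w) * d.2) ∧
      (w ∈ Set.Icc ((s - b) / s) 1 →
        w * (τ₁ / a) + (1 - w) * (τ₂ / b + (a + b - s) * τ₁ / (a * b)) ≤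
          w * d.1 + (1 - w) * d.2) := by
  have ha0 : 0 < a := by
    rw [ha, gam]
    have : 0 < Real.logb 2 (1 + P₁) := Real.logb_pos (by norm_num) (by linarith)
    linarith
  have hb0 : 0 < b := by
    rw [hb, gam]
    have : 0 < Real.logb 2 (1 + P₂) := Real.logb_pos (by norm_num) (by linarith)
    linarith
  have hbs : b < s := by
    rw [hb, hs, gam, gam]
    have : Real.logb 2 (1 + P₂) < Real.logb 2 (1 + (P₁ + P₂)) :=
      Real.logb_lt_logb (by norm_num) (by linarith) (by linarith)
    linarith
  have has : a < s := by
    rw [ha, hs, gam, gam]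
    have : Real.logb 2 (1 + P₁) < Real.logb 2 (1 + (P₁ + P₂)) :=
      Real.logb_lt_logb (by norm_num) (by linarith) (by linarith)
    linarith
  have habs : s ≤ a + b := by
    rw [ha, hb, hs, gam, gam, gam]
    have h1 : Real.logb 2 (1 + (P₁ + P₂)) ≤ Real.logb 2 ((1 + P₁) * (1 + P₂)) :=
      Real.logb_le_logb_of_le (by norm_num) (by positivity) (by nlinarith)
    have h2 : Real.logb 2 ((1 + P₁) * (1 + P₂)) =
        Real.logb 2 (1 + P₁) + Real.logb 2 (1 + P₂) :=
      Real.logb_mul (by positivity) (by positivity)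
    linarith
  have hsb0 : 0 < s - b := by linarith
  have hs0 : 0 < s := by linarith
  have hsbne : s - b ≠ 0 := ne_of_gt hsb0
  have hane : a ≠ 0 := ne_of_gt ha0
  have hbne : b ≠ 0 := ne_of_gt hb0
  have e1 : (s - b) * (τ₁ / (s - b)) = τ₁ := mul_div_cancel₀ τ₁ hsbne
  have e2 : b * (τ₂ / b) = τ₂ := mul_div_cancel₀ τ₂ hbne
  have e3 : a * (τ₁ / a) = τ₁ := mul_div_cancel₀ τ₁ hane
  have e4 : (a * b) * ((a + b - s) * τ₁ / (a * b)) = (a + b - s) * τ₁ :=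
    mul_div_cancel₀ _ (by positivity)
  subst hR
  refine ⟨⟨?_, ?_, ?_⟩, ⟨?_, ?_, ?_⟩, ?_⟩
  · show a * (τ₁ / (s - b)) ≥ τ₁
    have hpos : 0 < τ₁ / (s - b) := by positivity
    nlinarith [e1]
  · show b * (τ₂ / b) ≥ τ₂
    rw [e2]
  · show (s - b) * (τ₁ / (s - b)) + b * (τ₂ / b) ≥ τ₁ + τ₂
    rw [e1, e2]
  · show a * (τ₁ / a) ≥ τ₁
    rw [e3]
  · show b * (τ₂ / b + (a + b - s) * τ₁ / (a * b)) ≥ τ₂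
    have h : 0 ≤ (a + b - s) * τ₁ / (a * b) := by
      apply div_nonneg (by nlinarith) (by positivity)
    nlinarith [e2]
  · show (s - b) * (τ₁ / a) + b * (τ₂ / b + (a + b - s) * τ₁ / (a * b)) ≥ τ₁ + τ₂
    have : b * ((a + b - s) * τ₁ / (a * b)) = (a + b - s) * τ₁ / a := by
      field_simp
    rw [mul_add, e2, this]
    have : (s - b) * (τ₁ / a) + (a + b - s) * τ₁ / a = τ₁ := by
      field_simp; ring
    linarith
  · intro w hw d hd
    obtain ⟨h1, h2, h3⟩ := hd
    constructor
    · intro hw1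
      have hws : w * s ≤ s - b := by
        have := hw1.2
        rwa [le_div_iff₀ hs0] at this
      have key : b * (s - b) * (w * (τ₁ / (s - b)) + (1 - w) * (τ₂ / b)) ≤
          b * (s - b) * (w * d.1 + (1 - w) * d.2) := by
        have hg3 : 0 ≤ (s - b) * d.1 + b * d.2 - (τ₁ + τ₂) := by linarith
        have hg2 : 0 ≤ b * d.2 - τ₂ := by linarith
        have hmul1 : 0 ≤ w * b * ((s - b) * d.1 + b * d.2 - (τ₁ + τ₂)) :=
          mul_nonneg (mul_nonneg hw1.1 hb0.le) hg3
        have hmul2 : 0 ≤ (s - b - w * s) * (b * d.2 - τ₂) :=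
          mul_nonneg (by linarith) hg2
        have elhs : b * (s - b) * (w * (τ₁ / (s - b)) + (1 - w) * (τ₂ / b)) =
            w * b * τ₁ + (1 - w) * (s - b) * τ₂ := by
          field_simp
        rw [elhs]
        have hid : b * (s - b) * (w * d.1 + (1 - w) * d.2) -
            (w * b * τ₁ + (1 - w) * (s - b) * τ₂) =
            w * b * ((s - b) * d.1 + b * d.2 - (τ₁ + τ₂)) +
            (s - b - w * s) * (b * d.2 - τ₂) := by ring
        linarith
      exact le_of_mul_le_mul_left key (by positivity)
    · intro hw2
      have hws : s - b ≤ w * s := by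
        have := hw2.1
        rwa [div_le_iff₀ hs0] at this
      have key : a * b * (w * (τ₁ / a) + (1 - w) * (τ₂ / b + (a + b - s) * τ₁ / (a * b))) ≤
          a * b * (w * d.1 + (1 - w) * d.2) := by
        have hg3 : 0 ≤ (s - b) * d.1 + b * d.2 - (τ₁ + τ₂) := by linarith
        have hg1 : 0 ≤ a * d.1 - τ₁ := by linarith
        have hmul1 : 0 ≤ a * (1 - w) * ((s - b) * d.1 + b * d.2 - (τ₁ + τ₂)) :=
          mul_nonneg (mul_nonneg ha0.le (by linarith [hw2.2])) hg3
        have hmul2 : 0 ≤ (w * s - (s - b)) * (a * d.1 - τ₁) :=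
          mul_nonneg (by linarith) hg1
        have elhs : a * b * (w * (τ₁ / a) + (1 - w) * (τ₂ / b + (a + b - s) * τ₁ / (a * b))) =
            w * b * τ₁ + (1 - w) * (a * τ₂ + (a + b - s) * τ₁) := by
          field_simp
        rw [elhs]
        have hid : a * b * (w * d.1 + (1 - w) * d.2) -
            (w * b * τ₁ + (1 - w) * (a * τ₂ + (a + b - s) * τ₁)) =
            a * (1 - w) * ((s - b) * d.1 + b * d.2 - (τ₁ + τ₂)) +
            (w * s - (s - b)) * (a * d.1 - τ₁) := by ring
        linarith
      exact le_of_mul_le_mul_left key (by positivity)
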